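/- arXiv:1112.4572 — 4 statements merged into one kernel-verified Lean document; each statement's English description precedes it below -/
import Mathlib

section
/- Let F ⊆ [0,1]^{m×n} be defined by non-negative linear inequalities: φ ∈ F iff c(h)·φ ≤ d(h) for all h in a finite set H (all coefficients c_{ij}(h) ≥ 0, d(h) ≥ 0) and φ ≥ 0. Then for any (possibly correlated) joint type distribution D over finite type spaces, a reduced form π is feasible with respect to F if and only if for all weights W ∈ [0,1]^{n × Σ_i|T_i|}: Σ_{i,j} Σ_{A∈T_i} W_{ij}(A)·π_{ij}(A)·Pr[t_i = A] ≤ Σ_P Pr[P] · max_{φ(P)∈F} Σ_{i,j} W_{ij}(P_i)·φ_{ij}(P). -/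
lemma pi_single_sum {ι : Type*} [DecidableEq ι] {M : ι → Type*} [∀ i, AddCommMonoid (M i)]
    (i : ι) {κ : Type*} (s : Finset κ) (g : κ → M i) :
    (Pi.single i (∑ k ∈ s, g k) : ∀ i, M i) = ∑ k ∈ s, Pi.single i (g k) := by
  classical
  exact map_sum (AddMonoidHom.single M i) g s

lemma pi_single_smul' {ι : Type*} [DecidableEq ι] {M : ι → Type*} [∀ i, AddCommMonoid (M i)]
    [∀ i, Module ℝ (M i)] (i : ι) (c : ℝ) (x : M i) :
    (Pi.single i (c • x) : ∀ i, M i) = c • Pi.single i x := by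
  exact Pi.single_smul i c x

lemma swap_sum {m n : ℕ} {T : Fin m → Type*} [∀ i, Fintype (T i)] [∀ i, DecidableEq (T i)]
    (D : (∀ i, T i) → ℝ) (W : ∀ i, T i → Fin n → ℝ) (Φ : (∀ i, T i) → Fin m → Fin n → ℝ) :
    ∑ i, ∑ j, ∑ A : T i, W i A j * (∑ P : ∀ i', T i', if P i = A then D P * Φ P i j else 0)
      = ∑ P : ∀ i', T i', D P * ∑ i, ∑ j, W i (P i) j * Φ P i j := by
  have step : ∀ (i : Fin m) (j : Fin n),
      ∑ A : T i, W i A j * (∑ P : ∀ i', T i', if P i = A then D P * Φ P i j else 0)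
        = ∑ P : ∀ i', T i', W i (P i) j * (D P * Φ P i j) := by
    intro i j
    simp_rw [Finset.mul_sum, mul_ite, mul_zero]
    rw [Finset.sum_comm]
    simp [Finset.sum_ite_eq]
  simp_rw [step]
  rw [Finset.sum_congr rfl fun i _ => Finset.sum_comm
    (f := fun j P => W i (P i) j * (D P * Φ P i j))]
  rw [Finset.sum_comm]
  simp_rw [Finset.mul_sum]
  congr 1; funext P; congr 1; funext i; congr 1; funext j; ring

lemma repr_lemma {m n : ℕ} {T : Fin m → Type*} [∀ i, Fintype (T i)] [∀ i, DecidableEq (T i)]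
    (f : (∀ i, T i → Fin n → ℝ) →L[ℝ] ℝ) (x : ∀ i, T i → Fin n → ℝ) :
    f x = ∑ i, ∑ A : T i, ∑ j, x i A j *
      f (Pi.single i (Pi.single A (Pi.single j (1:ℝ)))) := by
  have hx : x = ∑ i, Pi.single i (∑ A : T i, Pi.single A (∑ j, Pi.single j (x i A j))) := by
    simp_rw [Finset.univ_sum_single]
  conv_lhs => rw [hx]
  rw [map_sum]
  refine Finset.sum_congr rfl fun i _ => ?_
  rw [pi_single_sum (M := fun i => T i → Fin n → ℝ) i Finset.univ
    (fun A => Pi.single A (∑ j, Pi.single j (x i A j))), map_sum]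
  refine Finset.sum_congr rfl fun A _ => ?_
  rw [pi_single_sum (M := fun _ : T i => Fin n → ℝ) A Finset.univ
    (fun j => Pi.single j (x i A j)),
    pi_single_sum (M := fun i => T i → Fin n → ℝ) i Finset.univ
    (fun j => Pi.single A (Pi.single j (x i A j))), map_sum]
  refine Finset.sum_congr rfl fun j _ => ?_
  have h1 : (Pi.single j (x i A j) : Fin n → ℝ)
      = x i A j • (Pi.single j (1:ℝ) : Fin n → ℝ) := by
    rw [← pi_single_smul' (M := fun _ : Fin n => ℝ) j (x i A j) 1, smul_eq_mul, mul_one]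
  rw [h1, pi_single_smul' (M := fun _ : T i => Fin n → ℝ) A,
    pi_single_smul' (M := fun i => T i → Fin n → ℝ) i, map_smul, smul_eq_mul]

lemma csSup_image_mul_left {c : ℝ} (hc : 0 ≤ c) {s : Set ℝ} (hne : s.Nonempty)
    (hbdd : BddAbove s) : sSup ((fun t => c * t) '' s) = c * sSup s := by
  refine (Monotone.map_csSup_of_continuousAt ?_ ?_ hne hbdd).symm
  · exact (continuous_const.mul continuous_id).continuousAt
  · exact fun a b hab => mul_le_mul_of_nonneg_left hab hc

/-- The weighted generalization of Border's theorem for feasibility sets with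
non-negative linear feasibility constraints.  `F ⊆ [0,1]^{m×n}` is defined by the
non-negative inequalities `c(h)·φ ≤ d(h)` (`h ∈ ι`) and `φ ≥ 0`.  For any, possibly
correlated, joint type distribution `D` over finite type spaces, a reduced form `π` is
feasible w.r.t. `F` iff for all weights `W ∈ [0,1]^{n × Σ_i|T_i|}`:
`Σ_{i,j} Σ_{A∈T_i} W_{ij}(A)·π_{ij}(A)·Pr[t_i = A]
  ≤ Σ_P Pr[P] · max_{φ ∈ F} Σ_{i,j} W_{ij}(P_i)·φ_{ij}`. -/
theorem stmt_12 (m n : ℕ) (T : Fin m → Type*)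
    [∀ i, Fintype (T i)] [∀ i, DecidableEq (T i)]
    (D : (∀ i, T i) → ℝ) (hD0 : ∀ P, 0 ≤ D P) (hD1 : ∑ P, D P = 1)
    (ι : Type*) [Fintype ι]
    (c : ι → Fin m → Fin n → ℝ) (d : ι → ℝ)
    (hc : ∀ h i j, 0 ≤ c h i j) (hd : ∀ h, 0 ≤ d h)
    (F : Set (Fin m → Fin n → ℝ))
    (hF : ∀ φ, φ ∈ F ↔ ((∀ i j, 0 ≤ φ i j) ∧ ∀ h, ∑ i, ∑ j, c h i j * φ i j ≤ d h))
    (hFbdd : ∀ φ ∈ F, ∀ i j, φ i j ≤ 1)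
    (π : ∀ i, T i → Fin n → ℝ)
    (hπ : ∀ i A j, 0 ≤ π i A j ∧ π i A j ≤ 1) :
    (∃ Φ : (∀ i, T i) → Fin m → Fin n → ℝ,
        (∀ P, Φ P ∈ F) ∧
        (∀ (i : Fin m) (A : T i) (j : Fin n),
          (∑ P : ∀ i', T i', if P i = A then D P * Φ P i j else 0)
            = π i A j * ∑ P : ∀ i', T i', if P i = A then D P else 0)) ↔
    (∀ W : ∀ i : Fin m, T i → Fin n → ℝ,
      (∀ i A j, 0 ≤ W i A j ∧ W i A j ≤ 1) →
      ∑ i, ∑ j, ∑ A : T i,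
          W i A j * π i A j * (∑ P : ∀ i', T i', if P i = A then D P else 0)
        ≤ ∑ P : ∀ i', T i',
            D P * sSup ((fun φ => ∑ i, ∑ j, W i (P i) j * φ i j) '' F)) := by
  classical
  -- basic facts about F
  have h0F : (fun _ _ => (0:ℝ)) ∈ F := by
    rw [hF]
    exact ⟨fun i j => le_refl 0, fun h => by simp [hd h]⟩
  have hFne : F.Nonempty := ⟨_, h0F⟩
  have hbddIm : ∀ (w : Fin m → Fin n → ℝ), (∀ i j, 0 ≤ w i j) →
      ∀ z ∈ (fun φ => ∑ i, ∑ j, w i j * φ i j) '' F, z ≤ ∑ i, ∑ j, w i j := by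
    rintro w hw z ⟨φ, hφ, rfl⟩
    refine Finset.sum_le_sum fun i _ => Finset.sum_le_sum fun j _ => ?_
    calc w i j * φ i j ≤ w i j * 1 :=
          mul_le_mul_of_nonneg_left (hFbdd φ hφ i j) (hw i j)
      _ = w i j := mul_one _
  constructor
  · rintro ⟨Φ, hΦF, hΦeq⟩ W hW
    have key : ∑ i, ∑ j, ∑ A : T i,
        W i A j * π i A j * (∑ P : ∀ i', T i', if P i = A then D P else 0)
        = ∑ P : ∀ i', T i', D P * ∑ i, ∑ j, W i (P i) j * Φ P i j := by
      rw [← swap_sum D W Φ]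
      refine Finset.sum_congr rfl fun i _ => Finset.sum_congr rfl fun j _ =>
        Finset.sum_congr rfl fun A _ => ?_
      rw [hΦeq i A j, mul_assoc]
    rw [key]
    refine Finset.sum_le_sum fun P _ => mul_le_mul_of_nonneg_left ?_ (hD0 P)
    refine le_csSup ⟨∑ i, ∑ j, W i (P i) j, hbddIm _ (fun i j => (hW i (P i) j).1)⟩
      ⟨Φ P, hΦF P, rfl⟩
  · intro hIneq
    have hF0 : ∀ φ ∈ F, ∀ i j, 0 ≤ φ i j := fun φ hφ => ((hF φ).mp hφ).1
    have pull : ∀ (h : ι) (t : ℝ) (g : Fin m → Fin n → ℝ),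
        ∑ i, ∑ j, c h i j * (t * g i j) = t * ∑ i, ∑ j, c h i j * g i j := by
      intro h t g
      rw [Finset.mul_sum]
      refine Finset.sum_congr rfl fun i _ => ?_
      rw [Finset.mul_sum]
      refine Finset.sum_congr rfl fun j _ => ?_
      ring
    have hFconv : Convex ℝ F := by
      intro φ hφ ψ hψ a b ha hb hab
      rw [hF] at hφ hψ ⊢
      constructor
      · intro i j
        simp only [Pi.add_apply, Pi.smul_apply, smul_eq_mul]
        exact add_nonneg (mul_nonneg ha (hφ.1 i j)) (mul_nonneg hb (hψ.1 i j))
      · intro h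
        have : ∑ i, ∑ j, c h i j * ((a • φ + b • ψ) i j)
            = a * (∑ i, ∑ j, c h i j * φ i j) + b * (∑ i, ∑ j, c h i j * ψ i j) := by
          simp only [Pi.add_apply, Pi.smul_apply, smul_eq_mul, mul_add,
            Finset.sum_add_distrib, pull]
        rw [this]
        calc a * (∑ i, ∑ j, c h i j * φ i j) + b * (∑ i, ∑ j, c h i j * ψ i j)
            ≤ a * d h + b * d h :=
              add_le_add (mul_le_mul_of_nonneg_left (hφ.2 h) ha)
                (mul_le_mul_of_nonneg_left (hψ.2 h) hb)
          _ = d h := by rw [← add_mul, hab, one_mul]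
    have hFcomp : IsCompact F := by
      have hclosed : IsClosed F := by
        have hFeq : F = (⋂ (i) (j), {φ : Fin m → Fin n → ℝ | 0 ≤ φ i j}) ∩
            ⋂ h, {φ : Fin m → Fin n → ℝ | ∑ i, ∑ j, c h i j * φ i j ≤ d h} := by
          ext φ
          simp [hF φ, Set.mem_iInter, forall_and]
        rw [hFeq]
        refine IsClosed.inter ?_ ?_
        · exact isClosed_iInter fun i => isClosed_iInter fun j =>
            isClosed_le continuous_const ((continuous_apply j).comp (continuous_apply i))
        · refine isClosed_iInter fun h => isClosed_le ?_ continuous_const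
          exact continuous_finset_sum _ fun i _ => continuous_finset_sum _ fun j _ =>
            continuous_const.mul ((continuous_apply j).comp (continuous_apply i))
      have hbox : IsCompact (Set.pi Set.univ fun _ : Fin m =>
          Set.pi Set.univ fun _ : Fin n => Set.Icc (0:ℝ) 1) :=
        isCompact_univ_pi fun _ => isCompact_univ_pi fun _ => isCompact_Icc
      refine hbox.of_isClosed_subset hclosed ?_
      intro φ hφ
      refine Set.mem_univ_pi.mpr fun i => Set.mem_univ_pi.mpr fun j => ?_
      exact Set.mem_Icc.mpr ⟨((hF φ).mp hφ).1 i j, hFbdd φ hφ i j⟩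
    have hdown : ∀ φ ∈ F, ∀ ψ : Fin m → Fin n → ℝ, (∀ i j, 0 ≤ ψ i j) →
        (∀ i j, ψ i j ≤ φ i j) → ψ ∈ F := by
      intro φ hφ ψ hψ0 hψle
      rw [hF]
      refine ⟨hψ0, fun h => le_trans ?_ (((hF φ).mp hφ).2 h)⟩
      exact Finset.sum_le_sum fun i _ => Finset.sum_le_sum fun j _ =>
        mul_le_mul_of_nonneg_left (hψle i j) (hc h i j)
    -- the linear evaluation map
    obtain ⟨L, hL⟩ : ∃ L : ((∀ i', T i') → Fin m → Fin n → ℝ) → (∀ i, T i → Fin n → ℝ),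
        ∀ Φ i A j, L Φ i A j = ∑ P : ∀ i', T i', if P i = A then D P * Φ P i j else 0 :=
      ⟨_, fun _ _ _ _ => rfl⟩
    obtain ⟨y, hy⟩ : ∃ y : ∀ i, T i → Fin n → ℝ,
        ∀ i A j, y i A j = π i A j * ∑ P : ∀ i', T i', if P i = A then D P else 0 :=
      ⟨_, fun _ _ _ => rfl⟩
    rcases Classical.em (y ∈ L '' (Set.pi Set.univ fun _ : (∀ i', T i') => F)) with hyS | hyS
    · obtain ⟨Φ, hΦ, hLy⟩ := hyS
      refine ⟨Φ, fun P => hΦ P (Set.mem_univ _), fun i A j => ?_⟩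
      have h := congrFun (congrFun (congrFun hLy i) A) j
      rw [hL, hy] at h
      exact h
    · exfalso
      -- convexity and compactness of the image set
      have hLlin : IsLinearMap ℝ L := by
        constructor
        · intro Φ Ψ
          funext i A j
          simp only [Pi.add_apply]
          rw [hL, hL, hL, ← Finset.sum_add_distrib]
          refine Finset.sum_congr rfl fun P _ => ?_
          by_cases hPA : P i = A <;> simp [hPA, mul_add]
        · intro a Φ
          funext i A j
          simp only [Pi.smul_apply, smul_eq_mul]
          rw [hL, hL, Finset.mul_sum]
          refine Finset.sum_congr rfl fun P _ => ?_
          by_cases hPA : P i = A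
          · simp only [hPA, if_true, Pi.smul_apply, smul_eq_mul]
            ring
          · simp [hPA]
      have hLcont : Continuous L := by
        have hLeq : L = fun Φ i A j => ∑ P : ∀ i', T i', if P i = A then D P * Φ P i j else 0 := by
          funext Φ i A j; rw [hL]
        rw [hLeq]
        refine continuous_pi fun i => continuous_pi fun A => continuous_pi fun j => ?_
        refine continuous_finset_sum _ fun P _ => ?_
        refine Continuous.if_const _ ?_ continuous_const
        exact continuous_const.mul
          ((continuous_apply j).comp ((continuous_apply i).comp (continuous_apply P)))
      have hSconv : Convex ℝ (L '' (Set.pi Set.univ fun _ : (∀ i', T i') => F)) :=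
        (convex_pi fun _ _ => hFconv).is_linear_image hLlin
      have hScomp : IsCompact (L '' (Set.pi Set.univ fun _ : (∀ i', T i') => F)) :=
        ((isCompact_univ_pi fun _ => hFcomp).image hLcont)
      obtain ⟨f, u, hfS, hfy⟩ := geometric_hahn_banach_closed_point hSconv hScomp.isClosed hyS
      -- weights from the separating functional
      obtain ⟨W₀, hW₀⟩ : ∃ W₀ : ∀ i, T i → Fin n → ℝ, ∀ i A j,
          W₀ i A j = f (Pi.single i (Pi.single A (Pi.single j (1:ℝ)))) := ⟨_, fun _ _ _ => rfl⟩
      have hrepr : ∀ x : ∀ i, T i → Fin n → ℝ,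
          f x = ∑ i, ∑ A : T i, ∑ j, x i A j * W₀ i A j := by
        intro x
        rw [repr_lemma f x]
        exact Finset.sum_congr rfl fun i _ => Finset.sum_congr rfl fun A _ =>
          Finset.sum_congr rfl fun j _ => by rw [hW₀]
      obtain ⟨W₁, hW₁⟩ : ∃ W₁ : ∀ i, T i → Fin n → ℝ, ∀ i A j,
          W₁ i A j = max (W₀ i A j) 0 := ⟨_, fun _ _ _ => rfl⟩
      have hW₁nn : ∀ i A j, 0 ≤ W₁ i A j := fun i A j => by rw [hW₁]; exact le_max_right _ _
      have hW₀le : ∀ i A j, W₀ i A j ≤ W₁ i A j := fun i A j => by rw [hW₁]; exact le_max_left _ _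
      -- nonnegativity of y
      have hPrnn : ∀ (i) (A : T i), (0:ℝ) ≤ ∑ P : ∀ i', T i', if P i = A then D P else 0 :=
        fun i A => Finset.sum_nonneg fun P _ => by
          by_cases hPA : P i = A <;> simp [hPA, hD0 P]
      have hynn : ∀ i A j, 0 ≤ y i A j := fun i A j => by
        rw [hy]; exact mul_nonneg (hπ i A j).1 (hPrnn i A)
      -- maximizers over F
      have hgcont : ∀ (w : Fin m → Fin n → ℝ),
          Continuous fun φ : Fin m → Fin n → ℝ => ∑ i, ∑ j, w i j * φ i j := by
        intro w
        refine continuous_finset_sum _ fun i _ => continuous_finset_sum _ fun j _ => ?_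
        exact continuous_const.mul ((continuous_apply j).comp (continuous_apply i))
      have hmax : ∀ P : ∀ i', T i', ∃ φ ∈ F, ∀ ψ ∈ F,
          ∑ i, ∑ j, W₁ i (P i) j * ψ i j ≤ ∑ i, ∑ j, W₁ i (P i) j * φ i j := by
        intro P
        obtain ⟨φ, hφ, hm⟩ := hFcomp.exists_isMaxOn hFne
          ((hgcont (fun i j => W₁ i (P i) j)).continuousOn)
        exact ⟨φ, hφ, fun ψ hψ => hm hψ⟩
      choose φmax hφmaxF hφmaxMax using hmax
      have hsSup : ∀ P : ∀ i', T i',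
          sSup ((fun φ => ∑ i, ∑ j, W₁ i (P i) j * φ i j) '' F)
            = ∑ i, ∑ j, W₁ i (P i) j * φmax P i j := by
        intro P
        refine IsGreatest.csSup_eq ⟨⟨φmax P, hφmaxF P, rfl⟩, ?_⟩
        rintro z ⟨ψ, hψ, rfl⟩
        exact hφmaxMax P ψ hψ
      -- truncated mechanism
      obtain ⟨Φ', hΦ'⟩ : ∃ Φ' : (∀ i', T i') → Fin m → Fin n → ℝ, ∀ P i j,
          Φ' P i j = if W₀ i (P i) j < 0 then 0 else φmax P i j := ⟨_, fun _ _ _ => rfl⟩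
      have hΦ'F : ∀ P, Φ' P ∈ F := by
        intro P
        refine hdown (φmax P) (hφmaxF P) _ (fun i j => ?_) (fun i j => ?_) <;> rw [hΦ']
        · split
          · exact le_refl 0
          · exact hF0 _ (hφmaxF P) i j
        · split
          · exact hF0 _ (hφmaxF P) i j
          · exact le_refl _
      have haS : L Φ' ∈ L '' (Set.pi Set.univ fun _ : (∀ i', T i') => F) :=
        ⟨Φ', fun P _ => hΦ'F P, rfl⟩
      -- value of f at L Φ'
      have hfa : f (L Φ') = ∑ P : ∀ i', T i',
          D P * sSup ((fun φ => ∑ i, ∑ j, W₁ i (P i) j * φ i j) '' F) := by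
        rw [hrepr (L Φ')]
        have h2 : ∀ i : Fin m, ∑ A : T i, ∑ j, L Φ' i A j * W₀ i A j
            = ∑ j, ∑ A : T i, W₀ i A j *
              (∑ P : ∀ i', T i', if P i = A then D P * Φ' P i j else 0) := by
          intro i
          rw [Finset.sum_comm]
          exact Finset.sum_congr rfl fun j _ => Finset.sum_congr rfl fun A _ => by
            rw [hL, mul_comm]
        rw [Finset.sum_congr rfl fun i _ => h2 i, swap_sum D W₀ Φ']
        refine Finset.sum_congr rfl fun P _ => ?_
        rw [hsSup P]
        congr 1
        refine Finset.sum_congr rfl fun i _ => Finset.sum_congr rfl fun j _ => ?_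
        by_cases hneg : W₀ i (P i) j < 0
        · rw [hΦ' P i j, if_pos hneg, hW₁, max_eq_right hneg.le]
          ring
        · rw [hΦ' P i j, if_neg hneg, hW₁, max_eq_left (not_lt.mp hneg)]
      -- f y bounded by the W₁-pairing with y
      have hyW₁ : f y ≤ ∑ i, ∑ A : T i, ∑ j, y i A j * W₁ i A j := by
        rw [hrepr y]
        exact Finset.sum_le_sum fun i _ => Finset.sum_le_sum fun A _ =>
          Finset.sum_le_sum fun j _ =>
            mul_le_mul_of_nonneg_left (hW₀le i A j) (hynn i A j)
      -- normalize W₁ into [0,1]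
      set cc : ℝ := 1 + ∑ i, ∑ A : T i, ∑ j, W₁ i A j with hcc
      have hsumnn : (0:ℝ) ≤ ∑ i, ∑ A : T i, ∑ j, W₁ i A j :=
        Finset.sum_nonneg fun i _ => Finset.sum_nonneg fun A _ =>
          Finset.sum_nonneg fun j _ => hW₁nn i A j
      have hccpos : 0 < cc := by rw [hcc]; linarith
      have hW₁lecc : ∀ i A j, W₁ i A j ≤ cc := by
        intro i A j
        have h1 : W₁ i A j ≤ ∑ j, W₁ i A j :=
          Finset.single_le_sum (fun j _ => hW₁nn i A j) (Finset.mem_univ j)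
        have h2 : ∑ j, W₁ i A j ≤ ∑ A : T i, ∑ j, W₁ i A j :=
          Finset.single_le_sum (fun A _ => Finset.sum_nonneg fun j _ => hW₁nn i A j)
            (Finset.mem_univ A)
        have h3 : ∑ A : T i, ∑ j, W₁ i A j ≤ ∑ i, ∑ A : T i, ∑ j, W₁ i A j :=
          Finset.single_le_sum (f := fun i => ∑ A : T i, ∑ j, W₁ i A j)
            (fun i _ => Finset.sum_nonneg fun A _ =>
            Finset.sum_nonneg fun j _ => hW₁nn i A j) (Finset.mem_univ i)
        rw [hcc]; linarith
      obtain ⟨W, hW⟩ : ∃ W : ∀ i, T i → Fin n → ℝ, ∀ i A j,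
          W i A j = W₁ i A j / cc := ⟨_, fun _ _ _ => rfl⟩
      have hWbounds : ∀ i A j, 0 ≤ W i A j ∧ W i A j ≤ 1 := by
        intro i A j
        rw [hW]
        exact ⟨div_nonneg (hW₁nn i A j) hccpos.le,
          (div_le_one hccpos).mpr (hW₁lecc i A j)⟩
      have hmain := hIneq W hWbounds
      -- rewrite LHS of hmain
      have hLHS : ∑ i, ∑ j, ∑ A : T i,
          W i A j * π i A j * (∑ P : ∀ i', T i', if P i = A then D P else 0)
          = cc⁻¹ * ∑ i, ∑ A : T i, ∑ j, y i A j * W₁ i A j := by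
        rw [Finset.mul_sum]
        refine Finset.sum_congr rfl fun i _ => ?_
        rw [Finset.mul_sum, Finset.sum_comm]
        refine Finset.sum_congr rfl fun A _ => ?_
        rw [Finset.mul_sum]
        refine Finset.sum_congr rfl fun j _ => ?_
        rw [hW, hy]
        field_simp
      -- rewrite RHS of hmain
      have hRHS : ∑ P : ∀ i', T i',
          D P * sSup ((fun φ => ∑ i, ∑ j, W i (P i) j * φ i j) '' F)
          = cc⁻¹ * ∑ P : ∀ i', T i',
            D P * sSup ((fun φ => ∑ i, ∑ j, W₁ i (P i) j * φ i j) '' F) := by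
        rw [Finset.mul_sum]
        refine Finset.sum_congr rfl fun P _ => ?_
        have himg : (fun φ => ∑ i, ∑ j, W i (P i) j * φ i j) '' F
            = (fun t => cc⁻¹ * t) '' ((fun φ => ∑ i, ∑ j, W₁ i (P i) j * φ i j) '' F) := by
          rw [← Set.image_comp]
          refine Set.image_congr fun φ _ => ?_
          simp only [Function.comp]
          rw [Finset.mul_sum]
          refine Finset.sum_congr rfl fun i _ => ?_
          rw [Finset.mul_sum]
          refine Finset.sum_congr rfl fun j _ => ?_
          rw [hW]
          ring
        have hbdd : BddAbove ((fun φ => ∑ i, ∑ j, W₁ i (P i) j * φ i j) '' F) :=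
          ⟨∑ i, ∑ j, W₁ i (P i) j, fun z hz =>
            hbddIm (fun i j => W₁ i (P i) j) (fun i j => hW₁nn i (P i) j) z hz⟩
        rw [himg, csSup_image_mul_left (inv_nonneg.mpr hccpos.le) (hFne.image _) hbdd]
        ring
      rw [hLHS, hRHS] at hmain
      have hAB : ∑ i, ∑ A : T i, ∑ j, y i A j * W₁ i A j
          ≤ ∑ P : ∀ i', T i',
            D P * sSup ((fun φ => ∑ i, ∑ j, W₁ i (P i) j * φ i j) '' F) :=
        le_of_mul_le_mul_left (by simpa [mul_comm] using hmain) (inv_pos.mpr hccpos)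
      have h1 := hfS (L Φ') haS
      rw [hfa] at h1
      linarith [hyW₁, hfy]
end

section
/- The multi-item reduced form π (for bidders with demand constraints C_i and arbitrarily correlated types) is feasible if and only if the associated multi-commodity flow problem has a feasible solution satisfying every demand: sources S(j) for each item j, intermediate nodes I(P) for each profile P, sinks T(i,A) for each bidder-type pair; edge S(j)→I(P) of capacity Pr[P], edge I(P)→T(i,P_i) of capacity C_i·Pr[P]; commodity G_{ij}(A) must route Pr[t_i=A]·π_{ij}(A) units from S(j) to T(i,A). -/
/-- Multi-commodity flow characterization of feasibility for multi-item reduced forms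
with demand constraints and arbitrarily correlated bidders.  A reduced form `π` is
feasible (there exists an ex-post rule `φ` with `φ ≥ 0`, `Σ_j φ_{ij}(P) ≤ C_i`,
`Σ_i φ_{ij}(P) ≤ 1`, inducing `π`) iff the associated multi-commodity flow problem has
a feasible solution `g` satisfying every demand: `g i j A P` is the flow of commodity
`G_{ij}(A)` routed on the path `S(j) → I(P) → T(i,A)` (which exists only when `P_i = A`);
the demand of commodity `G_{ij}(A)` is `Pr[t_i=A]·π_{ij}(A)`; the capacity of edge
`S(j)→I(P)` is `Pr[P]` and of edge `I(P)→T(i,P_i)` is `C_i·Pr[P]`. -/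
theorem stmt_14 (m n : ℕ) (T : Fin m → Type*)
    [∀ i, Fintype (T i)] [∀ i, DecidableEq (T i)]
    (D : (∀ i, T i) → ℝ) (hD0 : ∀ P, 0 ≤ D P) (hD1 : ∑ P, D P = 1)
    (C : Fin m → ℝ) (hC : ∀ i, 0 ≤ C i)
    (π : ∀ i, T i → Fin n → ℝ) :
    (∃ φ : (∀ i, T i) → Fin m → Fin n → ℝ,
        (∀ P i j, 0 ≤ φ P i j) ∧
        (∀ P i, ∑ j, φ P i j ≤ C i) ∧
        (∀ P j, ∑ i, φ P i j ≤ 1) ∧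
        (∀ (i : Fin m) (A : T i) (j : Fin n),
          (∑ P : ∀ i', T i', if P i = A then φ P i j * D P else 0)
            = π i A j * ∑ P : ∀ i', T i', if P i = A then D P else 0)) ↔
    (∃ g : (i : Fin m) → Fin n → T i → (∀ i', T i') → ℝ,
        -- flows are non-negative:
        (∀ i j A P, 0 ≤ g i j A P) ∧
        -- commodity G_{ij}(A) only uses paths through profiles P with P_i = A:
        (∀ i j A P, P i ≠ A → g i j A P = 0) ∧
        -- every demand is satisfied:
        (∀ (i : Fin m) (j : Fin n) (A : T i),
          (∑ P : ∀ i', T i', g i j A P)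
            = π i A j * ∑ P : ∀ i', T i', if P i = A then D P else 0) ∧
        -- capacity of edge S(j) → I(P):
        (∀ (j : Fin n) (P : ∀ i', T i'), ∑ i : Fin m, ∑ A : T i, g i j A P ≤ D P) ∧
        -- capacity of edge I(P) → T(i, P_i):
        (∀ (i : Fin m) (P : ∀ i', T i'),
          ∑ j : Fin n, ∑ A : T i, g i j A P ≤ C i * D P)) := by

  constructor
  · rintro ⟨φ, hpos, hcap1, hcap2, hdem⟩
    refine ⟨fun i j A P => if P i = A then φ P i j * D P else 0, ?_, ?_, ?_, ?_, ?_⟩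
    · intro i j A P
      dsimp only
      split
      · exact mul_nonneg (hpos P i j) (hD0 P)
      · exact le_refl 0
    · intro i j A P h
      simp [h]
    · intro i j A
      exact hdem i A j
    · intro j P
      dsimp only
      have : ∀ i : Fin m, (∑ A : T i, if P i = A then φ P i j * D P else 0)
          = φ P i j * D P := by
        intro i; simp
      rw [Finset.sum_congr rfl fun i _ => this i]
      rw [← Finset.sum_mul]
      calc (∑ i, φ P i j) * D P ≤ 1 * D P :=
            mul_le_mul_of_nonneg_right (hcap2 P j) (hD0 P)
        _ = D P := one_mul _
    · intro i P
      dsimp only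
      have : ∀ j : Fin n, (∑ A : T i, if P i = A then φ P i j * D P else 0)
          = φ P i j * D P := by
        intro j; simp
      rw [Finset.sum_congr rfl fun j _ => this j]
      rw [← Finset.sum_mul]
      exact mul_le_mul_of_nonneg_right (hcap1 P i) (hD0 P)
  · rintro ⟨g, hpos, hsupp, hdem, hcapS, hcapI⟩
    have hzero : ∀ i j A P, D P = 0 → g i j A P = 0 := by
      intro i j A P hDP
      have h1 : ∑ i' : Fin m, ∑ A' : T i', g i' j A' P ≤ 0 := by
        rw [← hDP]; exact hcapS j P
      by_contra hne
      have hlt : 0 < g i j A P := lt_of_le_of_ne (hpos i j A P) (Ne.symm hne)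
      have h2 : g i j A P ≤ ∑ i' : Fin m, ∑ A' : T i', g i' j A' P := by
        have hA : g i j A P ≤ ∑ A' : T i, g i j A' P :=
          Finset.single_le_sum (fun A' _ => hpos i j A' P) (Finset.mem_univ A)
        refine hA.trans ?_
        exact Finset.single_le_sum (f := fun i' => ∑ A' : T i', g i' j A' P)
          (fun i' _ => Finset.sum_nonneg fun A' _ => hpos i' j A' P) (Finset.mem_univ i)
      linarith
    refine ⟨fun P i j => if D P = 0 then 0 else g i j (P i) P / D P, ?_, ?_, ?_, ?_⟩
    · intro P i j
      dsimp only
      split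
      · exact le_refl 0
      · exact div_nonneg (hpos i j (P i) P) (hD0 P)
    · intro P i
      by_cases hDP : D P = 0
      · simp [hDP, hC i]
      · have hDpos : 0 < D P := lt_of_le_of_ne (hD0 P) (Ne.symm hDP)
        simp only [hDP, if_false]
        rw [← Finset.sum_div, div_le_iff₀ hDpos]
        have : ∀ j : Fin n, g i j (P i) P = ∑ A : T i, g i j A P := by
          intro j
          rw [Finset.sum_eq_single (P i)]
          · intro A _ hA; exact hsupp i j A P (Ne.symm hA)
          · intro h; exact absurd (Finset.mem_univ (P i)) h
        rw [Finset.sum_congr rfl fun j _ => this j]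
        exact hcapI i P
    · intro P j
      by_cases hDP : D P = 0
      · simp [hDP]
      · have hDpos : 0 < D P := lt_of_le_of_ne (hD0 P) (Ne.symm hDP)
        simp only [hDP, if_false]
        rw [← Finset.sum_div, div_le_iff₀ hDpos, one_mul]
        have : ∀ i : Fin m, g i j (P i) P = ∑ A : T i, g i j A P := by
          intro i
          rw [Finset.sum_eq_single (P i)]
          · intro A _ hA; exact hsupp i j A P (Ne.symm hA)
          · intro h; exact absurd (Finset.mem_univ (P i)) h
        rw [Finset.sum_congr rfl fun i _ => this i]
        exact hcapS j P
    · intro i A j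
      rw [← hdem i j A]
      apply Finset.sum_congr rfl
      intro P _
      by_cases hPi : P i = A
      · by_cases hDP : D P = 0
        · simp [hPi, hDP, hzero i j A P hDP]
        · simp [hPi, hDP, div_mul_cancel₀ _ hDP]
      · simp [hPi, hsupp i j A P hPi]
end

section
/- False Extension 1 is false: there exist three i.i.d. unit-demand bidders and two items with a reduced form satisfying (a) Σ_j π_j(A) ≤ 1 for every type A (per-type demand constraint in expectation) and (b) each item individually satisfies Border's condition, yet the reduced form is infeasible. Concretely: each bidder has types A (probability ε) and B (probability 1−ε), with π_1(A)=π_2(A)=1/2 and π_1(B)=π_2(B)=0; this is infeasible for small ε since a type-A bidder must receive an item whenever present, but all three bidders may simultaneously be type A with only two items available. -/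
/- Three i.i.d. unit-demand bidders, two items.  Each bidder has type A (`true`) with
probability ε and type B (`false`) with probability 1 − ε. -/

/-- The type distribution: `Pr[A] = ε`, `Pr[B] = 1 − ε`. -/
noncomputable def muE (ε : ℝ) : Bool → ℝ := fun t => if t then ε else 1 - ε

/-- The symmetric reduced form: `π_1(A) = π_2(A) = 1/2`, `π_1(B) = π_2(B) = 0`. -/
noncomputable def piE : Fin 2 → Bool → ℝ := fun _ t => if t then 1/2 else 0

lemma sum_pi3 (f : (Fin 3 → Bool) → ℝ) :
    ∑ P : Fin 3 → Bool, f P = ∑ a : Bool, ∑ b : Bool, ∑ c : Bool, f ![a,b,c] := by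
  have := (Fintype.sum_bijective (fun p : Bool × Bool × Bool => ![p.1, p.2.1, p.2.2])
    (by decide) (fun p => f ![p.1, p.2.1, p.2.2]) f (fun _ => rfl))
  rw [← this, Fintype.sum_prod_type]
  simp [Fintype.sum_prod_type]

/-- False Extension 1 is false: the reduced form above satisfies (a) the per-type
expected demand constraint `Σ_j π_j(A) ≤ 1` and (b) Border's condition for each item
individually, yet (c) it is infeasible (no ex-post rule allocating each item to at most
one bidder and at most one item per bidder induces it). -/
theorem stmt_15 (ε : ℝ) (hε : 0 < ε) (hε' : ε < 1/2) :
    -- (a) demand constraints met in expectation for every type: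
    (∀ t : Bool, ∑ j : Fin 2, piE j t ≤ 1) ∧
    -- (b) Border's condition holds for each item individually:
    (∀ (j : Fin 2) (S : Finset Bool),
      (3 : ℝ) * ∑ t ∈ S, piE j t * muE ε t ≤ 1 - (1 - ∑ t ∈ S, muE ε t) ^ 3) ∧
    -- (c) yet the reduced form is infeasible:
    ¬ ∃ φ : (Fin 3 → Bool) → Fin 3 → Fin 2 → ℝ,
        (∀ P i j, 0 ≤ φ P i j) ∧
        -- each item is awarded at most once:
        (∀ P (j : Fin 2), ∑ i, φ P i j ≤ 1) ∧
        -- unit demand: each bidder receives at most one item: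
        (∀ P (i : Fin 3), ∑ j, φ P i j ≤ 1) ∧
        -- the interim marginals equal π:
        (∀ (i : Fin 3) (t : Bool) (j : Fin 2),
          (∑ P : Fin 3 → Bool,
            if P i = t then (∏ l ∈ Finset.univ.erase i, muE ε (P l)) * φ P i j else 0)
          = piE j t) := by
  refine ⟨?_, ?_, ?_⟩
  · intro t; cases t <;> simp [piE, Fin.sum_univ_two] <;> norm_num
  · intro j S
    fin_cases S <;> simp [piE, muE] <;> nlinarith [sq_nonneg ε, sq_nonneg (1 - ε)]
  · rintro ⟨φ, hpos, hitem, hdem, hmarg⟩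
    have hμpos : ∀ t, 0 < muE ε t := by
      intro t; cases t <;> simp [muE] <;> linarith
    have hw : ∀ (P : Fin 3 → Bool) (i : Fin 3),
        0 < ∏ l ∈ Finset.univ.erase i, muE ε (P l) :=
      fun P i => Finset.prod_pos fun l _ => hμpos _
    -- Step 1: interim sum with total demand equals 1
    have hS : ∀ i : Fin 3,
        ∑ P : Fin 3 → Bool,
          (if P i = true then (∏ l ∈ Finset.univ.erase i, muE ε (P l)) * (∑ j, φ P i j) else 0)
          = 1 := by
      intro i
      have h0 := hmarg i true 0
      have h1 := hmarg i true 1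
      have hsum : ∑ P : Fin 3 → Bool,
          ((if P i = true then (∏ l ∈ Finset.univ.erase i, muE ε (P l)) * φ P i 0 else 0)
           + (if P i = true then (∏ l ∈ Finset.univ.erase i, muE ε (P l)) * φ P i 1 else 0))
          = 1 := by
        rw [Finset.sum_add_distrib, h0, h1]; norm_num [piE]
      rw [← hsum]
      apply Finset.sum_congr rfl
      intro P _
      split_ifs with h
      · rw [Fin.sum_univ_two]; ring
      · ring
    -- Step 2: the weight sum equals 1
    have hW : ∀ i : Fin 3,
        ∑ P : Fin 3 → Bool,
          (if P i = true then (∏ l ∈ Finset.univ.erase i, muE ε (P l)) else 0) = 1 := by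
      intro i
      fin_cases i <;>
      · rw [sum_pi3]
        simp [muE, show (Finset.univ.erase (0:Fin 3)) = {1,2} by decide,
          show (Finset.univ.erase (1:Fin 3)) = {0,2} by decide,
          show (Finset.univ.erase (2:Fin 3)) = {0,1} by decide, Finset.prod_pair]
        ring
    -- Step 3: at the all-true profile, every bidder's total allocation is 1
    have key : ∀ i : Fin 3, ∑ j, φ (fun _ => true) i j = 1 := by
      intro i
      have hzero : ∑ P : Fin 3 → Bool,
          (if P i = true then
            (∏ l ∈ Finset.univ.erase i, muE ε (P l)) * (1 - ∑ j, φ P i j) else 0) = 0 := by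
        have : ∀ P : Fin 3 → Bool,
            (if P i = true then
              (∏ l ∈ Finset.univ.erase i, muE ε (P l)) * (1 - ∑ j, φ P i j) else 0)
            = (if P i = true then (∏ l ∈ Finset.univ.erase i, muE ε (P l)) else 0)
              - (if P i = true then
                  (∏ l ∈ Finset.univ.erase i, muE ε (P l)) * (∑ j, φ P i j) else 0) := by
          intro P; split_ifs <;> ring
        simp_rw [this]
        rw [Finset.sum_sub_distrib, hS i, hW i]; ring
      have hnonneg : ∀ P ∈ (Finset.univ : Finset (Fin 3 → Bool)),
          0 ≤ (if P i = true then
            (∏ l ∈ Finset.univ.erase i, muE ε (P l)) * (1 - ∑ j, φ P i j) else 0) := by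
        intro P _
        split_ifs with h
        · exact mul_nonneg (hw P i).le (by linarith [hdem P i])
        · exact le_rfl
      have h0 := (Finset.sum_eq_zero_iff_of_nonneg hnonneg).mp hzero
        (fun _ => true) (Finset.mem_univ _)
      rw [if_pos rfl] at h0
      rcases mul_eq_zero.mp h0 with h | h
      · exact absurd h (hw _ i).ne'
      · linarith
    -- Step 4: contradiction
    have h3 : ∑ i, ∑ j, φ (fun _ => true) i j = 3 := by
      rw [Fin.sum_univ_three, key 0, key 1, key 2]; norm_num
    have h2 : ∑ i, ∑ j, φ (fun _ => true) i j ≤ 2 := by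
      rw [Finset.sum_comm]
      calc ∑ j : Fin 2, ∑ i, φ (fun _ => true) i j ≤ ∑ j : Fin 2, 1 :=
            Finset.sum_le_sum fun j _ => hitem _ j
        _ = 2 := by simp
    linarith
end

section
/- For a strict, partially-ordered hierarchical mechanism H in the independent-bidders single-item setting with induced reduced form π, the number of tight constraints among the polytope inequalities (the monotonicity constraints π_i(A_{i,j}) ≥ π_i(A_{i,j+1}) and the Border constraints for the down-closed sets ∪_i {A_{i,1},…,A_{i,x_i}}) is at least Σ_i |T_i|, via an injective map from types to tight constraints: a type at a level above the guaranteed-winner threshold maps to either a tight monotonicity constraint (if the next type shares its level) or the tight Border constraint of the near-constricting set of levels above it, while types below the threshold map to tight monotonicity constraints π_i(A_{i,j}) = π_i(A_{i,j+1}) (with π values 0). -/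
noncomputable def sMinLevel {m : ℕ} {T : Fin m → Type*}
    (H : (Σ i, T i) → ℕ∞) (P : ∀ i, T i) : ℕ∞ :=
  Finset.univ.inf fun j => H ⟨j, P j⟩

/-- Probability that bidder `i` receives the item under hierarchical mechanism `H` on
profile `P`. -/
noncomputable def sAlloc {m : ℕ} {T : Fin m → Type*}
    (H : (Σ i, T i) → ℕ∞) (P : ∀ i, T i) (i : Fin m) : ℝ :=
  if sMinLevel H P = ⊤ then 0
  else if H ⟨i, P i⟩ = sMinLevel H P then
    1 / ((Finset.univ.filter fun j : Fin m => H ⟨j, P j⟩ = sMinLevel H P).card : ℝ)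
  else 0

/-- Interim probability that bidder `i` reporting type `A` receives the item under `H`. -/
noncomputable def sInterim {m : ℕ} {T : Fin m → Type*}
    [∀ i, Fintype (T i)] [∀ i, DecidableEq (T i)]
    (μ : ∀ i, T i → ℝ) (H : (Σ i, T i) → ℕ∞) (i : Fin m) (A : T i) : ℝ :=
  ∑ P : ∀ j, T j,
    if P i = A then (∏ j ∈ Finset.univ.erase i, μ j (P j)) * sAlloc H P i else 0

section helpers

variable {m : ℕ} {k : Fin m → ℕ}

lemma sAlloc_congr (H : (Σ i, Fin (k i)) → ℕ∞) (P Q : ∀ j, Fin (k j))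
    (h : ∀ j, H ⟨j, P j⟩ = H ⟨j, Q j⟩) (i : Fin m) : sAlloc H P i = sAlloc H Q i := by
  have hmin : sMinLevel H P = sMinLevel H Q := by
    unfold sMinLevel
    exact Finset.inf_congr rfl (fun j _ => h j)
  unfold sAlloc
  simp only [hmin, h]

lemma sInterim_congr (μ : ∀ i, Fin (k i) → ℝ) (H : (Σ i, Fin (k i)) → ℕ∞)
    (i : Fin m) (A A' : Fin (k i)) (hAA' : H ⟨i, A⟩ = H ⟨i, A'⟩) :
    sInterim μ H i A = sInterim μ H i A' := by
  rcases eq_or_ne A A' with rfl | hne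
  · rfl
  have hinv : Function.Involutive
      (fun P : ∀ j, Fin (k j) => Function.update P i (Equiv.swap A A' (P i))) := by
    intro P
    funext j
    rcases eq_or_ne j i with rfl | hj
    · simp
    · simp [Function.update_of_ne hj]
  let e : Equiv.Perm (∀ j, Fin (k j)) := Function.Involutive.toPerm _ hinv
  unfold sInterim
  refine Fintype.sum_equiv e _ _ (fun P => ?_)
  have hei : (e P) i = Equiv.swap A A' (P i) := by
    show Function.update P i (Equiv.swap A A' (P i)) i = _
    simp
  have hej : ∀ j, j ≠ i → (e P) j = P j := by
    intro j hj
    show Function.update P i (Equiv.swap A A' (P i)) j = P j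
    rw [Function.update_of_ne hj]
  have hH : ∀ j, H ⟨j, (e P) j⟩ = H ⟨j, P j⟩ := by
    intro j
    rcases eq_or_ne j i with rfl | hj
    · rw [hei]
      rcases eq_or_ne (P j) A with h1 | h1
      · rw [h1, Equiv.swap_apply_left, ← hAA']
      rcases eq_or_ne (P j) A' with h2 | h2
      · rw [h2, Equiv.swap_apply_right, hAA']
      · rw [Equiv.swap_apply_of_ne_of_ne h1 h2]
    · rw [hej j hj]
  have hprod : (∏ j ∈ Finset.univ.erase i, μ j ((e P) j))
      = ∏ j ∈ Finset.univ.erase i, μ j (P j) :=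
    Finset.prod_congr rfl (fun j hj => by rw [hej j (Finset.ne_of_mem_erase hj)])
  have halloc : sAlloc H (e P) i = sAlloc H P i :=
    sAlloc_congr H _ _ hH i
  have hcond : ((e P) i = A') ↔ (P i = A) := by
    rw [hei]
    constructor
    · intro h
      have := congrArg (Equiv.swap A A') h
      simpa [Equiv.swap_apply_right] using this
    · intro h; rw [h, Equiv.swap_apply_left]
  by_cases hP : P i = A
  · rw [if_pos hP, if_pos (hcond.mpr hP), hprod, halloc]
  · rw [if_neg hP, if_neg (fun h => hP (hcond.mp h))]

lemma lowerSet_filter_iff {n : ℕ} (p : Fin n → Prop) [DecidablePred p]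
    (hp : ∀ a b : Fin n, a ≤ b → p b → p a) (j : Fin n) :
    (j : ℕ) < (Finset.univ.filter p).card ↔ p j := by
  constructor
  · intro hj
    by_contra hpj
    have hsub : Finset.univ.filter p ⊆ Finset.Iio j := by
      intro a ha
      rw [Finset.mem_filter] at ha
      rw [Finset.mem_Iio]
      by_contra hja
      push_neg at hja
      exact hpj (hp j a hja ha.2)
    have := Finset.card_le_card hsub
    rw [Fin.card_Iio] at this
    omega
  · intro hpj
    have hsub : Finset.Iic j ⊆ Finset.univ.filter p := by
      intro a ha
      rw [Finset.mem_Iic] at ha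
      rw [Finset.mem_filter]
      exact ⟨Finset.mem_univ a, hp a j ha hpj⟩
    have := Finset.card_le_card hsub
    rw [Fin.card_Iic] at this
    omega

end helpers

section border

variable {m : ℕ} {k : Fin m → ℕ}

lemma stepB (hm : 0 < m) (H : (Σ i, Fin (k i)) → ℕ∞) (L : ℕ∞) (hL : L ≠ ⊤)
    (P : ∀ j, Fin (k j)) :
    ∑ i, (if H ⟨i, P i⟩ ≤ L then sAlloc H P i else 0)
      = if sMinLevel H P ≤ L then 1 else 0 := by
  haveI : Nonempty (Fin m) := Fin.pos_iff_nonempty.mp hm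
  have huniv : (Finset.univ : Finset (Fin m)).Nonempty := Finset.univ_nonempty
  have hinfle : ∀ i : Fin m, sMinLevel H P ≤ H ⟨i, P i⟩ := by
    intro i
    simpa [sMinLevel] using
      Finset.inf_le (f := fun j : Fin m => H ⟨j, P j⟩) (Finset.mem_univ i)
  by_cases hM : sMinLevel H P ≤ L
  · have hMt : sMinLevel H P ≠ ⊤ := fun h => hL (top_le_iff.mp (h ▸ hM))
    set c := (Finset.univ.filter fun j : Fin m => H ⟨j, P j⟩ = sMinLevel H P).card with hc
    have hterm : ∀ i : Fin m, (if H ⟨i, P i⟩ ≤ L then sAlloc H P i else 0)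
        = if H ⟨i, P i⟩ = sMinLevel H P then 1 / (c : ℝ) else 0 := by
      intro i
      unfold sAlloc
      rw [if_neg hMt]
      by_cases hi : H ⟨i, P i⟩ = sMinLevel H P
      · simp [hi, hM, hc]
      · simp only [hi, if_false]
        split_ifs <;> rfl
    rw [if_pos hM, Finset.sum_congr rfl (fun i _ => hterm i), ← Finset.sum_filter,
      Finset.sum_const, ← hc, nsmul_eq_mul]
    have hc0 : 0 < c := by
      obtain ⟨i0, -, h0⟩ := Finset.exists_mem_eq_inf Finset.univ huniv
        (fun j : Fin m => H ⟨j, P j⟩)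
      refine Finset.card_pos.mpr ⟨i0, ?_⟩
      rw [Finset.mem_filter]
      exact ⟨Finset.mem_univ i0, by simpa [sMinLevel] using h0.symm⟩
    rw [mul_one_div, div_self (Nat.cast_ne_zero.mpr hc0.ne')]
  · rw [if_neg hM]
    refine Finset.sum_eq_zero fun i _ => if_neg fun h => hM (le_trans (hinfle i) h)

lemma border_tight (hm : 0 < m) (μ : ∀ i, Fin (k i) → ℝ) (hμ1 : ∀ i, ∑ j, μ i j = 1)
    (H : (Σ i, Fin (k i)) → ℕ∞) (L : ℕ∞) (hL : L ≠ ⊤) :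
    ∑ i, ∑ j ∈ Finset.univ.filter (fun j : Fin (k i) => H ⟨i, j⟩ ≤ L),
        sInterim μ H i j * μ i j
      = 1 - ∏ i, (1 - ∑ j ∈ Finset.univ.filter (fun j : Fin (k i) => H ⟨i, j⟩ ≤ L), μ i j) := by
  classical
  haveI : Nonempty (Fin m) := Fin.pos_iff_nonempty.mp hm
  have huniv : (Finset.univ : Finset (Fin m)).Nonempty := Finset.univ_nonempty
  set W : (∀ j, Fin (k j)) → ℝ := fun P => ∏ j, μ j (P j) with hW
  -- Step A
  have stepA : ∀ i : Fin m,
      ∑ j ∈ Finset.univ.filter (fun j : Fin (k i) => H ⟨i, j⟩ ≤ L),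
        sInterim μ H i j * μ i j
      = ∑ P : ∀ j, Fin (k j), (if H ⟨i, P i⟩ ≤ L then W P * sAlloc H P i else 0) := by
    intro i
    unfold sInterim
    simp only [Finset.sum_mul, ite_mul, zero_mul]
    rw [Finset.sum_comm]
    refine Finset.sum_congr rfl fun P _ => ?_
    rw [Finset.sum_ite_eq]
    simp only [Finset.mem_filter, Finset.mem_univ, true_and]
    split_ifs with h
    · simp only [hW]
      rw [← Finset.mul_prod_erase Finset.univ (fun j => μ j (P j)) (Finset.mem_univ i)]
      ring
    · rfl
  rw [Finset.sum_congr rfl (fun i _ => stepA i), Finset.sum_comm]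
  have hmid : ∀ P : ∀ j, Fin (k j),
      ∑ i, (if H ⟨i, P i⟩ ≤ L then W P * sAlloc H P i else 0)
        = if sMinLevel H P ≤ L then W P else 0 := by
    intro P
    have : ∑ i, (if H ⟨i, P i⟩ ≤ L then W P * sAlloc H P i else 0)
        = W P * ∑ i, (if H ⟨i, P i⟩ ≤ L then sAlloc H P i else 0) := by
      rw [Finset.mul_sum]
      exact Finset.sum_congr rfl fun i _ => by rw [mul_ite, mul_zero]
    rw [this, stepB hm H L hL P]
    split_ifs <;> simp
  rw [Finset.sum_congr rfl (fun P _ => hmid P)]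
  -- RHS
  have h1 : ∀ i : Fin m,
      (1 : ℝ) - ∑ j ∈ Finset.univ.filter (fun j : Fin (k i) => H ⟨i, j⟩ ≤ L), μ i j
      = ∑ j ∈ Finset.univ.filter (fun j : Fin (k i) => ¬ H ⟨i, j⟩ ≤ L), μ i j := by
    intro i
    have := Finset.sum_filter_add_sum_filter_not Finset.univ
      (fun j : Fin (k i) => H ⟨i, j⟩ ≤ L) (μ i)
    rw [hμ1 i] at this
    linarith
  rw [Finset.prod_congr rfl (fun i _ => h1 i), Finset.prod_univ_sum]
  have hone : (1 : ℝ) = ∑ P : ∀ j, Fin (k j), W P := by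
    have := Finset.prod_univ_sum (fun i : Fin m => (Finset.univ : Finset (Fin (k i))))
      (fun i j => μ i j)
    rw [Fintype.piFinset_univ] at this
    simp only [hW]
    rw [← this]
    simp [hμ1]
  have hfilt : (Fintype.piFinset fun i : Fin m =>
        Finset.univ.filter fun j : Fin (k i) => ¬ H ⟨i, j⟩ ≤ L)
      = Finset.univ.filter (fun P : ∀ j, Fin (k j) => ¬ sMinLevel H P ≤ L) := by
    ext P
    simp only [Fintype.mem_piFinset, Finset.mem_filter, Finset.mem_univ, true_and]
    rw [show (sMinLevel H P ≤ L) ↔ ∃ i ∈ Finset.univ, H ⟨i, P i⟩ ≤ L from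
      Finset.inf_le_iff (lt_top_iff_ne_top.mpr hL)]
    push_neg
    simp
  rw [hfilt]
  have hsplit := Finset.sum_filter_add_sum_filter_not Finset.univ
    (fun P : ∀ j, Fin (k j) => sMinLevel H P ≤ L) W
  rw [← Finset.sum_filter]
  rw [← hsplit] at hone
  linarith

end border

section mainaux

variable {m : ℕ} {k : Fin m → ℕ}

noncomputable def auxLstar (H : (Σ i, Fin (k i)) → ℕ∞) : ℕ∞ :=
  Finset.univ.inf fun i => Finset.univ.sup fun j : Fin (k i) => H ⟨i, j⟩

def auxCond (H : (Σ i, Fin (k i)) → ℕ∞) (t : Σ i, Fin (k i)) : Prop :=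
  H t = ⊤ ∨ auxLstar H < H t ∨
    ∃ h : (t.2 : ℕ) + 1 < k t.1, H ⟨t.1, ⟨(t.2 : ℕ) + 1, h⟩⟩ = H t

noncomputable def auxX (H : (Σ i, Fin (k i)) → ℕ∞) (L : ℕ∞) : Fin m → ℕ := by
  classical
  exact fun i => (Finset.univ.filter fun j : Fin (k i) => H ⟨i, j⟩ ≤ L).card

open Classical in
noncomputable def auxF (H : (Σ i, Fin (k i)) → ℕ∞) :
    (Σ i, Fin (k i)) → ((Σ i, Fin (k i)) ⊕ (Fin m → ℕ)) := fun t =>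
  if auxCond H t then Sum.inl t else Sum.inr (auxX H (H t))

lemma sMinLevel_le_auxLstar (H : (Σ i, Fin (k i)) → ℕ∞) (P : ∀ j, Fin (k j)) :
    sMinLevel H P ≤ auxLstar H := by
  refine Finset.inf_mono_fun fun i _ => ?_
  exact Finset.le_sup (f := fun j : Fin (k i) => H ⟨i, j⟩) (Finset.mem_univ (P i))

lemma sInterim_loser (μ : ∀ i, Fin (k i) → ℝ) (H : (Σ i, Fin (k i)) → ℕ∞)
    (i : Fin m) (A : Fin (k i))
    (hA : H ⟨i, A⟩ = ⊤ ∨ auxLstar H < H ⟨i, A⟩) : sInterim μ H i A = 0 := by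
  unfold sInterim
  refine Finset.sum_eq_zero fun P _ => ?_
  split_ifs with hP
  · rw [mul_eq_zero]
    right
    unfold sAlloc
    split_ifs with h1 h2
    · rfl
    · exfalso
      rw [hP] at h2
      rcases hA with hA | hA
      · exact h1 (h2.symm.trans hA)
      · exact absurd (le_trans h2.le (sMinLevel_le_auxLstar H P)) (not_le.mpr hA)
    · rfl
  · rfl

end mainaux

/-- For a strict, partially-ordered hierarchical mechanism `H` (types of bidder `i` are
`A_{i,0}, …, A_{i,k_i−1}`, listed in decreasing priority) with induced reduced form
`π = sInterim μ H`, there is an injective map from types to tight constraints of the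
polytope: each type is mapped either to a tight monotonicity constraint
`π_i(A_{i,j}) = π_i(A_{i,j+1})` (with `π_i(A_{i,k_i}) := 0`), or to a tight Border
(near-constricting) constraint for a down-closed set `∪_i {A_{i,0},…,A_{i,x_i−1}}`.
In particular the number of tight constraints is at least `Σ_i |T_i|`. -/
theorem stmt_19 (m : ℕ) (hm : 0 < m) (k : Fin m → ℕ) (hk : ∀ i, 0 < k i)
    (μ : ∀ i, Fin (k i) → ℝ) (hμpos : ∀ i j, 0 < μ i j) (hμ1 : ∀ i, ∑ j, μ i j = 1)
    (H : (Σ i, Fin (k i)) → ℕ∞)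
    -- partially ordered: each bidder's types appear in order of decreasing priority:
    (hord : ∀ (i : Fin m) (j j' : Fin (k i)), j ≤ j' → H ⟨i, j⟩ ≤ H ⟨i, j'⟩)
    -- strict: no non-LOSE level is shared by types of two distinct bidders:
    (hstrict : ∀ (i i' : Fin m) (j : Fin (k i)) (j' : Fin (k i')),
      i ≠ i' → H ⟨i, j⟩ = H ⟨i', j'⟩ → H ⟨i, j⟩ = ⊤) :
    ∃ f : (Σ i, Fin (k i)) → ((Σ i, Fin (k i)) ⊕ (Fin m → ℕ)),
      Function.Injective f ∧
      ∀ t : Σ i, Fin (k i),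
        -- if `t` maps to a monotonicity constraint, that constraint is tight:
        (∀ s : Σ i, Fin (k i), f t = Sum.inl s →
          sInterim μ H s.1 s.2 =
            (if h : (s.2 : ℕ) + 1 < k s.1 then sInterim μ H s.1 ⟨(s.2 : ℕ) + 1, h⟩
             else 0)) ∧
        -- if `t` maps to a Border constraint (a prefix-set vector `x`), it is tight:
        (∀ x : Fin m → ℕ, f t = Sum.inr x → (∀ i, x i ≤ k i) ∧
          (∑ i, ∑ j ∈ Finset.univ.filter (fun j : Fin (k i) => (j : ℕ) < x i),
              sInterim μ H i j * μ i j)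
            = 1 - ∏ i,
                (1 - ∑ j ∈ Finset.univ.filter (fun j : Fin (k i) => (j : ℕ) < x i),
                  μ i j)) := by
  classical
  -- the prefix property of the sets `{j : H ⟨i,j⟩ ≤ L}`
  have hpref : ∀ (L : ℕ∞) (i : Fin m) (j : Fin (k i)),
      ((j : ℕ) < auxX H L i ↔ H ⟨i, j⟩ ≤ L) := by
    intro L i j
    have : (Finset.univ.filter fun j : Fin (k i) => H ⟨i, j⟩ ≤ L).card = auxX H L i := by
      simp [auxX]
    rw [← this]
    exact lowerSet_filter_iff _ (fun a b hab hb => le_trans (hord i a b hab) hb) j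
  -- if the condition fails for two types with equal `auxX` vectors, the types are equal
  have hkey : ∀ t t' : Σ i, Fin (k i), ¬ auxCond H t → ¬ auxCond H t' →
      auxX H (H t) = auxX H (H t') → t = t' := by
    intro t t' h1 h2 hff
    have hle : ∀ (a b : Σ i, Fin (k i)), auxX H (H a) = auxX H (H b) → H a ≤ H b := by
      intro a b hab
      have h0 : ((a.2 : ℕ)) < auxX H (H a) a.1 := (hpref (H a) a.1 a.2).mpr le_rfl
      rw [hab] at h0
      exact (hpref (H b) a.1 a.2).mp h0
    have hEq : H t = H t' := le_antisymm (hle t t' hff) (hle t' t hff.symm)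
    have hii : t.1 = t'.1 := by
      by_contra hne
      exact h1 (Or.inl (hstrict t.1 t'.1 t.2 t'.2 hne hEq))
    obtain ⟨i, j⟩ := t
    obtain ⟨i', j'⟩ := t'
    cases hii
    rcases lt_trichotomy (j : ℕ) (j' : ℕ) with hlt | heq | hgt
    · exfalso
      apply h1
      right; right
      have hjlt : (j : ℕ) + 1 < k i := lt_of_le_of_lt hlt j'.isLt
      refine ⟨hjlt, le_antisymm ?_ ?_⟩
      · calc H ⟨i, ⟨(j : ℕ) + 1, hjlt⟩⟩ ≤ H ⟨i, j'⟩ := hord i _ j' (by simp [Fin.le_def]; omega)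
          _ = H ⟨i, j⟩ := hEq.symm
      · exact hord i j _ (by simp [Fin.le_def])
    · exact congrArg (fun jj => (⟨i, jj⟩ : Σ i, Fin (k i))) (Fin.ext heq)
    · exfalso
      apply h2
      right; right
      have hjlt : (j' : ℕ) + 1 < k i := lt_of_le_of_lt hgt j.isLt
      refine ⟨hjlt, le_antisymm ?_ ?_⟩
      · calc H ⟨i, ⟨(j' : ℕ) + 1, hjlt⟩⟩ ≤ H ⟨i, j⟩ := hord i _ j (by simp [Fin.le_def]; omega)
          _ = H ⟨i, j'⟩ := hEq
      · exact hord i j' _ (by simp [Fin.le_def])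
  refine ⟨auxF H, ?_, ?_⟩
  · -- injectivity
    intro t t' hff
    unfold auxF at hff
    by_cases h1 : auxCond H t <;> by_cases h2 : auxCond H t'
    · rw [if_pos h1, if_pos h2] at hff
      exact Sum.inl.inj hff
    · rw [if_pos h1, if_neg h2] at hff
      exact absurd hff (by simp)
    · rw [if_neg h1, if_pos h2] at hff
      exact absurd hff (by simp)
    · rw [if_neg h1, if_neg h2] at hff
      exact hkey t t' h1 h2 (Sum.inr.inj hff)
  · -- tightness
    intro t
    constructor
    · -- monotonicity constraints
      intro s hfs
      unfold auxF at hfs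
      by_cases hc : auxCond H t
      · rw [if_pos hc] at hfs
        obtain rfl : t = s := Sum.inl.inj hfs
        by_cases h3 : ∃ h : (t.2 : ℕ) + 1 < k t.1, H ⟨t.1, ⟨(t.2 : ℕ) + 1, h⟩⟩ = H t
        · obtain ⟨hlt, heq⟩ := h3
          rw [dif_pos hlt]
          exact sInterim_congr μ H t.1 t.2 _ heq.symm
        · have hl : H ⟨t.1, t.2⟩ = ⊤ ∨ auxLstar H < H ⟨t.1, t.2⟩ := by
            rcases hc with h | h | h
            · exact Or.inl h
            · exact Or.inr h
            · exact absurd h h3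
          rw [sInterim_loser μ H t.1 t.2 hl]
          split_ifs with hlt
          · symm
            apply sInterim_loser
            have hle : H ⟨t.1, t.2⟩ ≤ H ⟨t.1, ⟨(t.2 : ℕ) + 1, hlt⟩⟩ :=
              hord t.1 t.2 _ (by simp [Fin.le_def])
            rcases hl with h | h
            · exact Or.inl (top_le_iff.mp (h ▸ hle))
            · exact Or.inr (lt_of_lt_of_le h hle)
          · rfl
      · rw [if_neg hc] at hfs
        exact absurd hfs (by simp)
    · -- Border constraints
      intro x hfx
      unfold auxF at hfx
      by_cases hc : auxCond H t
      · rw [if_pos hc] at hfx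
        exact absurd hfx (by simp)
      · rw [if_neg hc] at hfx
        obtain rfl : auxX H (H t) = x := Sum.inr.inj hfx
        have hT : H t ≠ ⊤ := fun h => hc (Or.inl h)
        constructor
        · intro i
          have : auxX H (H t) i = (Finset.univ.filter
              fun j : Fin (k i) => H ⟨i, j⟩ ≤ H t).card := by simp [auxX]
          rw [this]
          calc (Finset.univ.filter fun j : Fin (k i) => H ⟨i, j⟩ ≤ H t).card
              ≤ (Finset.univ : Finset (Fin (k i))).card := Finset.card_filter_le _ _
            _ = k i := by simp
        · have hfilt : ∀ i : Fin m,
              Finset.univ.filter (fun j : Fin (k i) => (j : ℕ) < auxX H (H t) i)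
              = Finset.univ.filter (fun j : Fin (k i) => H ⟨i, j⟩ ≤ H t) :=
            fun i => Finset.filter_congr fun j _ => hpref (H t) i j
          simp only [hfilt]
          exact border_tight hm μ hμ1 H (H t) hT
end
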